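/- Let R be a (q,s) chain ring and let A be an n×m matrix over R in row canonical form whose first row is nonzero; let p₁ be the pivot of the first row, c₁ its column index, and d₁ = deg(p₁). Then for every element w = (w₁,…,w_m) of the row span of A: (i) p₁ divides every component w_j; and (ii) if j < c₁, then deg(w_j) > d₁. -/

import Mathlib

open scoped BigOperators

section ChainRingDefs

variable {R : Type*} [CommRing R]

/-- For a shape `μ = (μ₁,…,μ_s)` (0-indexed as `μ : Fin s → ℕ`), the exponent of `π`
governing the `j`-th coordinate (0-indexed) of the module `R^μ`: the number of
components of `μ` that are `≤ j`. -/
def shapeExp {s : ℕ} (μ : Fin s → ℕ) (j : ℕ) : ℕ :=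
  (Finset.univ.filter fun i : Fin s => μ i ≤ j).card

/-- The last (largest) component `μ_s` of a shape (for monotone `μ`). -/
def shapeLast {s : ℕ} (μ : Fin s → ℕ) : ℕ := Finset.univ.sup μ

/-- The module `R^μ = ⟨1⟩^{μ₁} × ⟨π⟩^{μ₂−μ₁} × ⋯ × ⟨π^{s−1}⟩^{μ_s−μ_{s−1}}`,
realized as a submodule of `R^{μ_s}`. -/
def shapeModule (R : Type*) [CommRing R] (π : R) {s : ℕ} (μ : Fin s → ℕ) :
    Submodule R (Fin (shapeLast μ) → R) :=
  Submodule.pi Set.univ fun j => Ideal.span {π ^ shapeExp μ (j : ℕ)}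

/-- The module `M` has shape `μ`, i.e. `M ≅ R^μ`. -/
def HasShape (R : Type*) [CommRing R] (π : R) {s : ℕ} (μ : Fin s → ℕ)
    (M : Type*) [AddCommGroup M] [Module R M] : Prop :=
  Nonempty (M ≃ₗ[R] shapeModule R π μ)

/-- The row span of a matrix: the submodule of `R^m` generated by its rows. -/
def rowSpan (R : Type*) [CommRing R] {n m : ℕ} (A : Matrix (Fin n) (Fin m) R) :
    Submodule R (Fin m → R) :=
  Submodule.span R (Set.range fun i => A i)

-- The degree of `a ∈ R`: the unique `l` with `a ∈ ⟨π^l⟩ \ ⟨π^{l+1}⟩` for `a ≠ 0`,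
-- and `s` for `a = 0`.
open Classical in
noncomputable def degR (π : R) (s : ℕ) (a : R) : ℕ :=
  if a = 0 then s else sSup {l : ℕ | a ∈ Ideal.span {π ^ l}}

/-- `j` is the pivot position of the row `r`: the earliest entry among the entries of
least degree in that row. -/
def IsPivotIdx (π : R) (s : ℕ) {m : ℕ} (r : Fin m → R) (j : Fin m) : Prop :=
  (∀ k, degR π s (r j) ≤ degR π s (r k)) ∧ ∀ k, k < j → degR π s (r j) < degR π s (r k)

/-- `V` is a complete set of residues modulo `π` containing `0`. -/
def IsCompleteResidues (π : R) (V : Set R) : Prop :=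
  0 ∈ V ∧ ∀ a : R, ∃! v, v ∈ V ∧ a - v ∈ Ideal.span {π}

/-- The set `R(R,π^l) = {Σ_{i<l} a_i π^i : a_i ∈ V}` of residues modulo `π^l`. -/
def residueSet (π : R) (V : Set R) (l : ℕ) : Set R :=
  {x | ∃ a : Fin l → R, (∀ i, a i ∈ V) ∧ x = ∑ i, a i * π ^ (i : ℕ)}

/-- The matrix `A` is in row canonical form (with respect to the residue set `V`). -/
def IsRCF (π : R) (s : ℕ) (V : Set R) {n m : ℕ} (A : Matrix (Fin n) (Fin m) R) : Prop :=
  -- (1) nonzero rows lie above zero rows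
  (∀ i i' : Fin n, i < i' → A i' ≠ 0 → A i ≠ 0) ∧
  -- (2) pivots of smaller degree lie above pivots of larger degree; among pivots of
  -- equal degree, earlier pivots lie above later ones
  (∀ i i' : Fin n, ∀ j j' : Fin m, i < i' → A i ≠ 0 → A i' ≠ 0 →
      IsPivotIdx π s (A i) j → IsPivotIdx π s (A i') j' →
      degR π s (A i j) ≤ degR π s (A i' j') ∧
        (degR π s (A i j) = degR π s (A i' j') → j ≤ j')) ∧
  -- (3) every pivot equals `π^l` for some `0 ≤ l ≤ s-1`
  (∀ i : Fin n, ∀ j : Fin m, A i ≠ 0 → IsPivotIdx π s (A i) j →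
      degR π s (A i j) < s ∧ A i j = π ^ degR π s (A i j)) ∧
  -- (4) entries below a pivot in its column are zero; entries above lie in `R(R,π^l)`
  (∀ i : Fin n, ∀ j : Fin m, A i ≠ 0 → IsPivotIdx π s (A i) j →
      (∀ i' : Fin n, i < i' → A i' j = 0) ∧
      (∀ i' : Fin n, i' < i → A i' j ∈ residueSet π V (degR π s (A i j))))

/-- For a shape `κ` (0-indexed) and `i : Fin s`, the previous component `κ_{i-1}`
(`0` when `i = 0`); with the paper's 1-indexed convention this is `κ_i` for the
0-indexed position `i` (whose 1-indexed position is `i+1`). -/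
def prevVal {s : ℕ} (κ : Fin s → ℕ) (i : Fin s) : ℕ :=
  if (i : ℕ) = 0 then 0
  else κ ⟨(i : ℕ) - 1, lt_of_le_of_lt (Nat.sub_le _ _) i.isLt⟩

end ChainRingDefs

section MyHelpers

variable {R : Type*} [CommRing R]

lemma my_span_pow_mono (π : R) {l l' : ℕ} (h : l ≤ l') :
    Ideal.span {π ^ l'} ≤ Ideal.span {π ^ l} := by
  rw [Ideal.span_singleton_le_span_singleton]
  exact ⟨π ^ (l' - l), by rw [← pow_add, Nat.add_sub_cancel' h]⟩

lemma my_bddAbove {s : ℕ} (π : R) (hnil : π ^ s = 0) {a : R} (ha : a ≠ 0) :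
    BddAbove {l : ℕ | a ∈ Ideal.span {π ^ l}} := by
  refine ⟨s, fun l hl => ?_⟩
  by_contra hls
  push_neg at hls
  have hz : π ^ l = 0 := by
    have : π ^ l = π ^ s * π ^ (l - s) := by
      rw [← pow_add, Nat.add_sub_cancel' hls.le]
    rw [this, hnil, zero_mul]
  rw [Set.mem_setOf_eq, hz, Ideal.span_singleton_eq_bot.mpr rfl, Ideal.mem_bot] at hl
  exact ha hl

lemma my_mem_span_pow_of_le_degR {s : ℕ} (π : R) (hnil : π ^ s = 0)
    {a : R} {l : ℕ} (h : l ≤ degR π s a) : a ∈ Ideal.span {π ^ l} := by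
  by_cases ha : a = 0
  · simp [ha]
  · have hmem : a ∈ Ideal.span {π ^ degR π s a} := by
      unfold degR
      rw [if_neg ha]
      have hne : ({l : ℕ | a ∈ Ideal.span {π ^ l}}).Nonempty := by
        refine ⟨0, ?_⟩
        simp [Ideal.span_singleton_eq_top.mpr]
      exact Nat.sSup_mem hne (my_bddAbove π hnil ha)
    exact my_span_pow_mono π h hmem

lemma my_le_degR_of_mem {s : ℕ} (π : R) (hnil : π ^ s = 0) {a : R} {l : ℕ}
    (hl : l ≤ s) (h : a ∈ Ideal.span {π ^ l}) : l ≤ degR π s a := by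
  by_cases ha : a = 0
  · unfold degR; rw [if_pos ha]; exact hl
  · unfold degR
    rw [if_neg ha]
    exact le_csSup (my_bddAbove π hnil ha) h

lemma my_exists_pivot {m : ℕ} (π : R) (s : ℕ) (r : Fin m → R) (hr : r ≠ 0) :
    ∃ j, IsPivotIdx π s r j := by
  have hm : Nonempty (Fin m) := by
    obtain ⟨j, _⟩ := Function.ne_iff.mp hr
    exact ⟨j⟩
  have hune : (Finset.univ : Finset (Fin m)).Nonempty := Finset.univ_nonempty
  set d := Finset.univ.inf' hune (fun k => degR π s (r k)) with hd
  obtain ⟨j₀, _, hj₀⟩ := Finset.exists_mem_eq_inf' hune (fun k => degR π s (r k))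
  have hS : (Finset.univ.filter fun k => degR π s (r k) = d).Nonempty :=
    ⟨j₀, by simp [hj₀.symm, hd]⟩
  set j := (Finset.univ.filter fun k => degR π s (r k) = d).min' hS with hj
  have hjd : degR π s (r j) = d := by
    have := (Finset.univ.filter fun k => degR π s (r k) = d).min'_mem hS
    simpa using this
  refine ⟨j, fun k => ?_, fun k hk => ?_⟩
  · rw [hjd]; exact Finset.inf'_le _ (Finset.mem_univ k)
  · rw [hjd]
    rcases lt_or_eq_of_le (Finset.inf'_le (fun k => degR π s (r k)) (Finset.mem_univ k) : d ≤ degR π s (r k)) with h | h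
    · exact h
    · exfalso
      have hkS : k ∈ Finset.univ.filter fun k => degR π s (r k) = d := by simp [h.symm, hd]
      exact absurd (Finset.min'_le _ _ hkS) (not_le.mpr hk)

end MyHelpers

/-- For a row canonical form with nonzero first row, the first pivot divides every
component of every element of the row span, and components in earlier columns have
strictly larger degree. -/
theorem rcf_first_pivot_divides {R : Type*} [CommRing R] [Fintype R] [IsLocalRing R] [IsPrincipalIdealRing R]
    (q s : ℕ) (hs : 0 < s) (π : R)
    (hmax : IsLocalRing.maximalIdeal R = Ideal.span {π})
    (hnil : π ^ s = 0) (hnil' : π ^ (s - 1) ≠ 0)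
    (hq : Nat.card (IsLocalRing.ResidueField R) = q)
    (V : Set R) (hV : IsCompleteResidues π V)
    {n m : ℕ} (hn : 0 < n) (A : Matrix (Fin n) (Fin m) R) (hA : IsRCF π s V A)
    (h0 : A ⟨0, hn⟩ ≠ 0) (c : Fin m) (hc : IsPivotIdx π s (A ⟨0, hn⟩) c)
    (w : Fin m → R) (hw : w ∈ rowSpan R A) :
    (∀ j, A ⟨0, hn⟩ c ∣ w j) ∧
    (∀ j : Fin m, j < c → degR π s (A ⟨0, hn⟩ c) < degR π s (w j)) := by
  obtain ⟨h1, h2, h3, h4⟩ := hA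
  set i0 : Fin n := ⟨0, hn⟩ with hi0
  set d₁ := degR π s (A i0 c) with hd₁
  have hd₁s : d₁ < s := (h3 i0 c h0 hc).1
  have hpivval : A i0 c = π ^ d₁ := (h3 i0 c h0 hc).2
  have claim : ∀ i j, A i j ∈ Ideal.span {π ^ d₁} ∧
      (j < c → A i j ∈ Ideal.span {π ^ (d₁ + 1)}) := by
    intro i j
    by_cases hi : A i = 0
    · have : A i j = 0 := congrFun hi j
      simp [this]
    by_cases hii : i = i0
    · subst hii
      refine ⟨my_mem_span_pow_of_le_degR π hnil (hc.1 j), fun hjc => ?_⟩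
      exact my_mem_span_pow_of_le_degR π hnil (hc.2 j hjc)
    · have hlt : i0 < i := by
        refine lt_of_le_of_ne ?_ (Ne.symm hii)
        rw [hi0, Fin.le_def]
        exact Nat.zero_le _
      obtain ⟨ji, hji⟩ := my_exists_pivot π s (A i) hi
      have h2' := h2 i0 i c ji hlt h0 hi hc hji
      refine ⟨my_mem_span_pow_of_le_degR π hnil (le_trans h2'.1 (hji.1 j)), fun hjc => ?_⟩
      rcases lt_or_eq_of_le h2'.1 with hlt' | heq
      · exact my_mem_span_pow_of_le_degR π hnil (le_trans hlt' (hji.1 j))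
      · have hcle : c ≤ ji := h2'.2 heq
        have hx : degR π s (A i ji) < degR π s (A i j) := hji.2 j (lt_of_lt_of_le hjc hcle)
        exact my_mem_span_pow_of_le_degR π hnil (by omega)
  set P : Submodule R (Fin m → R) := Submodule.pi Set.univ
    (fun j => if j < c then Ideal.span {π ^ (d₁ + 1)} else Ideal.span {π ^ d₁}) with hP
  have hsub : rowSpan R A ≤ P := by
    rw [rowSpan, Submodule.span_le]
    rintro _ ⟨i, rfl⟩
    rw [SetLike.mem_coe, hP, Submodule.mem_pi]
    intro j _
    by_cases hjc : j < c
    · rw [if_pos hjc]; exact (claim i j).2 hjc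
    · rw [if_neg hjc]; exact (claim i j).1
  have hwP := hsub hw
  rw [hP, Submodule.mem_pi] at hwP
  constructor
  · intro j
    have hmem : w j ∈ Ideal.span {π ^ d₁} := by
      have := hwP j (Set.mem_univ j)
      by_cases hjc : j < c
      · rw [if_pos hjc] at this
        exact my_span_pow_mono π (Nat.le_succ d₁) this
      · rwa [if_neg hjc] at this
    rw [hpivval]
    exact Ideal.mem_span_singleton.mp hmem
  · intro j hjc
    have hmem := hwP j (Set.mem_univ j)
    rw [if_pos hjc] at hmem
    have := my_le_degR_of_mem π (s := s) hnil (l := d₁ + 1) (by omega) hmem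
    omega
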